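/- Let (Y(j))_{j≥1} be a sequence of independent and identically distributed real random variables with E[Y(1)] = 0 and E[|Y(1)|] < ∞, let μ > 0, and set H(n) = exp(μn + Σ_{j=1}^n Y(j)) for n ≥ 1. Let x solve x(n+1) = Σ_{j=0}^n k(n−j) x(j) + H(n+1) for n ≥ 0 with x(0) > 0, where k : ℕ → ℝ is nonnegative with Σ_{j=0}^∞ k(j) < 1. Then almost surely: x(n) > 0 for all n ≥ 0, x(n) → ∞ as n → ∞, and (1/n) log x(n) → μ as n → ∞. -/

import Mathlib

open Filter Finset MeasureTheory ProbabilityTheory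

/-- Deterministic core: given the Volterra recursion with exponential forcing and a
sublinear perturbation `S`, the conclusions hold. -/
lemma stmt14_aux {μ : ℝ} (hμ : 0 < μ) {k : ℕ → ℝ} (hkpos : ∀ j, 0 ≤ k j)
    (hksum : Summable k) (hk1 : ∑' j : ℕ, k j < 1)
    {x : ℕ → ℝ} {S : ℕ → ℝ} (hx0 : 0 < x 0)
    (hx : ∀ n : ℕ, x (n + 1) = (∑ j ∈ Finset.range (n + 1), k (n - j) * x j)
        + Real.exp (μ * (n + 1) + S (n + 1)))
    (hS : Tendsto (fun n : ℕ => S n / n) atTop (nhds 0)) :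
    (∀ n : ℕ, 0 < x n) ∧ Tendsto x atTop atTop ∧
      Tendsto (fun n : ℕ => (1 / (n : ℝ)) * Real.log (x n)) atTop (nhds μ) := by
  -- positivity
  have hpos : ∀ n, 0 < x n := by
    intro n
    induction n using Nat.strong_induction_on with
    | _ n ih =>
      match n with
      | 0 => exact hx0
      | n + 1 =>
        rw [hx]
        have hsum : 0 ≤ ∑ j ∈ Finset.range (n + 1), k (n - j) * x j :=
          Finset.sum_nonneg fun j hj =>
            mul_nonneg (hkpos _) (ih j (Finset.mem_range.1 hj)).le
        exact add_pos_of_nonneg_of_pos hsum (Real.exp_pos _)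
  -- lower bound by the forcing term
  have hlb : ∀ n : ℕ, Real.exp (μ * (n + 1) + S (n + 1)) ≤ x (n + 1) := by
    intro n
    rw [hx]
    have hsum : 0 ≤ ∑ j ∈ Finset.range (n + 1), k (n - j) * x j :=
      Finset.sum_nonneg fun j hj => mul_nonneg (hkpos _) (hpos j).le
    linarith
  have hlb' : ∀ n : ℕ, 1 ≤ n → Real.exp (μ * n + S n) ≤ x n := by
    intro n hn
    obtain ⟨m, rfl⟩ := Nat.exists_eq_add_of_le hn
    simpa [add_comm] using hlb m
  -- `μ + S n / n → μ`
  have hμS : Tendsto (fun n : ℕ => μ + S n / n) atTop (nhds μ) := by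
    simpa using (tendsto_const_nhds (x := μ)).add hS
  -- the exponent tends to infinity
  have hexp : Tendsto (fun n : ℕ => μ * n + S n) atTop atTop := by
    have h1 : Tendsto (fun n : ℕ => (μ / 2) * n) atTop atTop :=
      (tendsto_natCast_atTop_atTop (R := ℝ)).const_mul_atTop (by linarith)
    apply tendsto_atTop_mono' _ _ h1
    have h2 : ∀ᶠ n : ℕ in atTop, μ / 2 ≤ μ + S n / n :=
      hμS.eventually (eventually_ge_nhds (show μ / 2 < μ by linarith))
    filter_upwards [h2, eventually_ge_atTop 1] with n hn hn1
    have hn0 : (0 : ℝ) < n := by exact_mod_cast hn1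
    have : μ * n + S n = (μ + S n / n) * n := by
      rw [add_mul, div_mul_cancel₀ _ hn0.ne']
    rw [this]
    exact mul_le_mul_of_nonneg_right hn hn0.le
  have hxtop : Tendsto x atTop atTop := by
    apply tendsto_atTop_mono' _ _ ((Real.tendsto_exp_atTop.comp hexp))
    filter_upwards [eventually_ge_atTop 1] with n hn
    exact hlb' n hn
  refine ⟨hpos, hxtop, ?_⟩
  -- the logarithmic limit
  set K : ℝ := ∑' j : ℕ, k j with hK
  have hK0 : 0 ≤ K := tsum_nonneg hkpos
  rw [Metric.tendsto_atTop]
  intro ε hε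
  have hεlt : μ < μ + ε / 3 := by linarith
  set lam : ℝ := μ + ε / 3 with hlam
  have hlam0 : 0 < lam := by linarith
  -- eventually S n ≤ (ε/3) n
  obtain ⟨N, hN⟩ := eventually_atTop.1 (hS.eventually (eventually_le_nhds (show (0:ℝ) < ε / 3 by linarith)))
  -- constant dominating the forcing
  set C : ℝ := 1 + ∑ m ∈ Finset.range (N + 1), Real.exp (μ * m + S m) * Real.exp (-lam * m)
    with hCdef
  have hC1 : 1 ≤ C := by
    have : 0 ≤ ∑ m ∈ Finset.range (N + 1), Real.exp (μ * m + S m) * Real.exp (-lam * m) :=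
      Finset.sum_nonneg fun m _ => mul_nonneg (Real.exp_pos _).le (Real.exp_pos _).le
    linarith
  have hC0 : 0 < C := by linarith
  have hHbound : ∀ n : ℕ, Real.exp (μ * n + S n) ≤ C * Real.exp (lam * n) := by
    intro n
    rcases le_or_gt n N with hnN | hnN
    · have hmem : n ∈ Finset.range (N + 1) := Finset.mem_range.2 (by omega)
      have h1 : Real.exp (μ * n + S n) * Real.exp (-lam * n) ≤ C := by
        have := Finset.single_le_sum
          (f := fun m => Real.exp (μ * m + S m) * Real.exp (-lam * m))
          (fun m _ => mul_nonneg (Real.exp_pos _).le (Real.exp_pos _).le) hmem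
        have h2 : Real.exp (μ * n + S n) * Real.exp (-lam * n)
            ≤ ∑ m ∈ Finset.range (N + 1), Real.exp (μ * m + S m) * Real.exp (-lam * m) := this
        linarith
      calc Real.exp (μ * n + S n)
          = (Real.exp (μ * n + S n) * Real.exp (-lam * n)) * Real.exp (lam * n) := by
            rw [mul_assoc, ← Real.exp_add]; simp
        _ ≤ C * Real.exp (lam * n) :=
            mul_le_mul_of_nonneg_right h1 (Real.exp_pos _).le
    · have hn1 : (1 : ℕ) ≤ n := by omega
      have hn0 : (0 : ℝ) < n := by exact_mod_cast hn1
      have hSn : S n / n ≤ ε / 3 := hN n hnN.le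
      have hSn' : S n ≤ (ε / 3) * n := by
        have := mul_le_mul_of_nonneg_right hSn hn0.le
        rwa [div_mul_cancel₀ _ hn0.ne'] at this
      have : μ * n + S n ≤ lam * n := by rw [hlam]; nlinarith
      calc Real.exp (μ * n + S n) ≤ Real.exp (lam * n) := Real.exp_le_exp.2 this
        _ ≤ C * Real.exp (lam * n) := by nlinarith [Real.exp_pos (lam * n)]
  -- the contraction constant
  set q : ℝ := K * Real.exp (-lam) with hq
  have hq0 : 0 ≤ q := mul_nonneg hK0 (Real.exp_pos _).le
  have hq1 : q < 1 := by
    have he1 : Real.exp (-lam) < 1 := Real.exp_lt_one_iff.2 (by linarith)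
    nlinarith
  set M : ℝ := max (x 0) (C / (1 - q)) with hM
  have hM0 : 0 < M := lt_of_lt_of_le hx0 (le_max_left _ _)
  have hMC : C ≤ M * (1 - q) := by
    have h1 : C / (1 - q) ≤ M := le_max_right _ _
    have h2 : 0 < 1 - q := by linarith
    calc C = C / (1 - q) * (1 - q) := by field_simp
      _ ≤ M * (1 - q) := mul_le_mul_of_nonneg_right h1 h2.le
  -- the upper bound by induction
  have hub : ∀ n : ℕ, x n ≤ M * Real.exp (lam * n) := by
    intro n
    induction n using Nat.strong_induction_on with
    | _ n ih =>
      match n with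
      | 0 =>
        have h0 : x 0 ≤ M := le_max_left _ _
        simpa using h0
      | n + 1 =>
        rw [hx]
        have hstep : ∑ j ∈ Finset.range (n + 1), k (n - j) * x j
            ≤ M * K * Real.exp (lam * n) := by
          have h1 : ∑ j ∈ Finset.range (n + 1), k (n - j) * x j
              ≤ ∑ j ∈ Finset.range (n + 1), k (n - j) * (M * Real.exp (lam * j)) :=
            Finset.sum_le_sum fun j hj =>
              mul_le_mul_of_nonneg_left (ih j (Finset.mem_range.1 hj)) (hkpos _)
          have h2 : ∑ j ∈ Finset.range (n + 1), k (n - j) * (M * Real.exp (lam * j))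
              = ∑ i ∈ Finset.range (n + 1), k i * (M * Real.exp (lam * (n - i : ℕ))) := by
            have := Finset.sum_range_reflect
              (fun j => k (n - j) * (M * Real.exp (lam * j))) (n + 1)
            simp only [Nat.add_sub_cancel] at this
            rw [← this]
            apply Finset.sum_congr rfl
            intro j hj
            have hjn : j ≤ n := by have := Finset.mem_range.1 hj; omega
            congr 2
            omega
          have h3 : ∀ i ∈ Finset.range (n + 1),
              k i * (M * Real.exp (lam * (n - i : ℕ)))
                ≤ (k i * Real.exp (-lam * i)) * (M * Real.exp (lam * n)) := by
            intro i hi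
            have hin : i ≤ n := by have := Finset.mem_range.1 hi; omega
            have : ((n - i : ℕ) : ℝ) = (n : ℝ) - i := by
              rw [Nat.cast_sub hin]
            rw [this]
            have : Real.exp (lam * ((n : ℝ) - i)) = Real.exp (-lam * i) * Real.exp (lam * n) := by
              rw [← Real.exp_add]; ring_nf
            rw [this]; ring_nf; rfl
          have h4 : ∑ i ∈ Finset.range (n + 1), (k i * Real.exp (-lam * i)) ≤ K := by
            refine le_trans (Finset.sum_le_sum fun i _ => ?_)
              (Summable.sum_le_tsum _ (fun i _ => hkpos i) hksum)
            have he : Real.exp (-lam * i) ≤ 1 := by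
              apply Real.exp_le_one_iff.2
              have : (0:ℝ) ≤ lam * i := mul_nonneg hlam0.le (Nat.cast_nonneg i)
              linarith
            nlinarith [hkpos i, Real.exp_pos (-lam * (i:ℝ))]
          calc ∑ j ∈ Finset.range (n + 1), k (n - j) * x j
              ≤ ∑ i ∈ Finset.range (n + 1), k i * (M * Real.exp (lam * (n - i : ℕ))) := by
                rw [← h2]; exact h1
            _ ≤ ∑ i ∈ Finset.range (n + 1),
                  (k i * Real.exp (-lam * i)) * (M * Real.exp (lam * n)) :=
                Finset.sum_le_sum h3
            _ = (∑ i ∈ Finset.range (n + 1), k i * Real.exp (-lam * i))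
                  * (M * Real.exp (lam * n)) := by rw [← Finset.sum_mul]
            _ ≤ K * (M * Real.exp (lam * n)) :=
                mul_le_mul_of_nonneg_right h4
                  (mul_nonneg hM0.le (Real.exp_pos _).le)
            _ = M * K * Real.exp (lam * n) := by ring
        have hfor : Real.exp (μ * (n + 1) + S (n + 1)) ≤ C * Real.exp (lam * (n + 1)) := by
          have := hHbound (n + 1)
          simpa using this
        have key : M * K * Real.exp (lam * n) + C * Real.exp (lam * (n + 1))
            ≤ M * Real.exp (lam * (n + 1)) := by
          have hE : Real.exp (lam * ((n : ℝ) + 1)) = Real.exp (lam * n) * Real.exp lam := by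
            rw [← Real.exp_add]; ring_nf
          have hElam : Real.exp (-lam) * Real.exp lam = 1 := by
            rw [← Real.exp_add]; simp
          have hMq : M * q + C ≤ M := by nlinarith
          -- M*K*e^{lam n} + C*e^{lam(n+1)} = e^{lam(n+1)} * (M*q + C) since q = K e^{-lam}
          have h5 : M * K * Real.exp (lam * n)
              = M * q * Real.exp (lam * ((n:ℝ) + 1)) := by
            rw [hE, hq]
            linear_combination (-(M * K * Real.exp (lam * (n:ℝ)))) * hElam
          push_cast
          rw [h5]
          have := Real.exp_pos (lam * ((n:ℝ) + 1))
          nlinarith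
        push_cast at hfor ⊢
        linarith
  -- combine for the log limit
  have hlogup : ∀ᶠ n : ℕ in atTop, (1 / (n : ℝ)) * Real.log (x n) ≤ lam + Real.log M / n := by
    filter_upwards [eventually_ge_atTop 1] with n hn
    have hn0 : (0 : ℝ) < n := by exact_mod_cast hn
    have h1 : Real.log (x n) ≤ Real.log M + lam * n := by
      have := Real.log_le_log (hpos n) (hub n)
      rwa [Real.log_mul hM0.ne' (Real.exp_pos _).ne', Real.log_exp] at this
    have h2 : (1 / (n : ℝ)) * Real.log (x n) ≤ (1 / (n : ℝ)) * (Real.log M + lam * n) :=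
      mul_le_mul_of_nonneg_left h1 (by positivity)
    have h3 : (1 / (n : ℝ)) * (Real.log M + lam * n) = lam + Real.log M / n := by
      field_simp
      ring
    linarith
  have hlogdn : ∀ᶠ n : ℕ in atTop, μ + S n / n ≤ (1 / (n : ℝ)) * Real.log (x n) := by
    filter_upwards [eventually_ge_atTop 1] with n hn
    have hn0 : (0 : ℝ) < n := by exact_mod_cast hn
    have h1 : μ * n + S n ≤ Real.log (x n) := by
      have := Real.log_le_log (Real.exp_pos _) (hlb' n hn)
      rwa [Real.log_exp] at this
    have h2 : μ + S n / n = (1 / (n : ℝ)) * (μ * n + S n) := by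
      field_simp
    have h3 : (1 / (n : ℝ)) * (μ * n + S n) ≤ (1 / (n : ℝ)) * Real.log (x n) :=
      mul_le_mul_of_nonneg_left h1 (by positivity)
    linarith
  have hto : Tendsto (fun n : ℕ => Real.log M / n) atTop (nhds 0) :=
    tendsto_const_div_atTop_nhds_zero_nat _
  have hev : ∀ᶠ n : ℕ in atTop,
      dist ((1 / (n : ℝ)) * Real.log (x n)) μ < ε := by
    filter_upwards [hlogup, hlogdn,
      hto.eventually (gt_mem_nhds (show (0:ℝ) < ε / 3 by linarith)),
      hμS.eventually (eventually_gt_nhds (show μ - ε < μ by linarith))]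
      with n h1 h2 h3 h4
    rw [Real.dist_eq, abs_sub_lt_iff]
    constructor
    · have : (1 / (n : ℝ)) * Real.log (x n) ≤ lam + ε / 3 := by linarith
      rw [hlam] at this; linarith
    · linarith
  exact eventually_atTop.1 hev

theorem stmt14 {Ω : Type*} [MeasurableSpace Ω]
    (P : Measure Ω) [IsProbabilityMeasure P]
    (Y : ℕ → Ω → ℝ) (hYmeas : ∀ j, Measurable (Y j))
    (hYindep : iIndepFun Y P)
    (hYident : ∀ j, IdentDistrib (Y j) (Y 1) P P)
    (hYint : Integrable (Y 1) P)
    (hYmean : ∫ ω, Y 1 ω ∂P = 0)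
    (μ : ℝ) (hμ : 0 < μ)
    (k : ℕ → ℝ) (hkpos : ∀ j, 0 ≤ k j) (hksum : Summable k)
    (hk1 : ∑' j : ℕ, k j < 1)
    (H : ℕ → Ω → ℝ)
    (hH : ∀ n : ℕ, 1 ≤ n → ∀ ω,
      H n ω = Real.exp (μ * n + ∑ j ∈ Finset.Icc 1 n, Y j ω))
    (x : Ω → ℕ → ℝ) (hx0 : ∀ ω, 0 < x ω 0)
    (hx : ∀ ω, ∀ n : ℕ,
      x ω (n + 1) = (∑ j ∈ Finset.range (n + 1), k (n - j) * x ω j) + H (n + 1) ω) :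
    ∀ᵐ ω ∂P,
      (∀ n : ℕ, 0 < x ω n) ∧
      Tendsto (x ω) atTop atTop ∧
      Tendsto (fun n : ℕ => (1 / (n : ℝ)) * Real.log (x ω n)) atTop (nhds μ) := by
  -- Strong law of large numbers for Z i := Y (i+1)
  set Z : ℕ → Ω → ℝ := fun i => Y (i + 1) with hZ
  have hZint : Integrable (Z 0) P := hYint
  have hZindep : Pairwise (Function.onFun (IndepFun · · P) Z) := by
    intro i j hij
    exact hYindep.indepFun (show i + 1 ≠ j + 1 by omega)
  have hZident : ∀ i, IdentDistrib (Z i) (Z 0) P P :=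
    fun i => (hYident (i + 1)).trans (hYident 1).symm
  have hslln := strong_law_ae_real Z hZint hZindep hZident
  rw [show P[Z 0] = (0 : ℝ) from hYmean] at hslln
  filter_upwards [hslln] with ω hω
  -- rewrite the partial sums over `Icc 1 n` as sums over `range n`
  have hSeq : ∀ n : ℕ, (∑ j ∈ Finset.Icc 1 n, Y j ω) = ∑ i ∈ Finset.range n, Z i ω := by
    intro n
    induction n with
    | zero => simp
    | succ n ih =>
      rw [Finset.sum_Icc_succ_top (by omega : 1 ≤ n + 1), Finset.sum_range_succ, ih]
  have hS : Tendsto (fun n : ℕ => (∑ j ∈ Finset.Icc 1 n, Y j ω) / n) atTop (nhds 0) := by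
    simpa only [hSeq] using hω
  exact stmt14_aux hμ hkpos hksum hk1 (hx0 ω)
    (fun n => by rw [hx ω n, hH (n + 1) (by omega) ω]; push_cast; ring_nf) hS
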